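/- Suppose A ∈ ℝ^{M×N} is s-regular. Then the problem min (1/2)‖Ax − b‖² subject to ‖x‖₀ ≤ s, x ≥ 0 attains a global minimizer. -/

import Mathlib

set_option maxHeartbeats 1000000


open Filter Topology

noncomputable section

/-- number of nonzero entries of `x` (the ℓ₀ "norm"). -/
def nrm0 {N : ℕ} (x : Fin N → ℝ) : ℕ :=
  (Finset.univ.filter (fun i => x i ≠ 0)).card

/-- support of `x` as a finset. -/
def supp {N : ℕ} (x : Fin N → ℝ) : Finset (Fin N) :=
  Finset.univ.filter (fun i => x i ≠ 0)

/-- Bouligand tangent cone of `S` at `xb`. -/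
def BTan {N : ℕ} (S : Set (Fin N → ℝ)) (xb : Fin N → ℝ) : Set (Fin N → ℝ) :=
  {d | ∃ (x : ℕ → Fin N → ℝ) (lam : ℕ → ℝ),
    (∀ k, x k ∈ S) ∧ (∀ k, 0 ≤ lam k) ∧
    Tendsto x atTop (nhds xb) ∧
    Tendsto (fun k => lam k • (x k - xb)) atTop (nhds d)}

/-- Clarke tangent cone of `S` at `xb`. -/
def CTan {N : ℕ} (S : Set (Fin N → ℝ)) (xb : Fin N → ℝ) : Set (Fin N → ℝ) :=
  {d | ∀ (x : ℕ → Fin N → ℝ) (lam : ℕ → ℝ),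
    (∀ k, x k ∈ S) → (∀ k, 0 < lam k) →
    Tendsto x atTop (nhds xb) → Tendsto lam atTop (nhds (0 : ℝ)) →
    ∃ y : ℕ → Fin N → ℝ, Tendsto y atTop (nhds d) ∧ ∀ k, x k + lam k • y k ∈ S}

/-- set-valued Euclidean projection onto `Ω`. -/
def Proj {N : ℕ} (Ω : Set (Fin N → ℝ)) (x : Fin N → ℝ) : Set (Fin N → ℝ) :=
  {y | y ∈ Ω ∧ ∀ z ∈ Ω, ∑ i, (x i - y i) ^ 2 ≤ ∑ i, (x i - z i) ^ 2}

lemma sqrt_tri {M : ℕ} (u v : Fin M → ℝ) :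
    Real.sqrt (∑ j, (u j + v j)^2) ≤ Real.sqrt (∑ j, u j ^2) + Real.sqrt (∑ j, v j ^2) := by
  have h := norm_add_le ((WithLp.equiv 2 (Fin M → ℝ)).symm u) ((WithLp.equiv 2 (Fin M → ℝ)).symm v)
  simpa [EuclideanSpace.norm_eq, Real.norm_eq_abs, sq_abs, WithLp.equiv_symm_apply, PiLp.toLp_apply] using h

lemma nrm0_smul {N : ℕ} (c : ℝ) (hc : c ≠ 0) (x : Fin N → ℝ) : nrm0 (c • x) = nrm0 x := by
  unfold nrm0
  congr 1
  apply Finset.filter_congr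
  intro i _
  simp [Pi.smul_apply, hc]

lemma nrm0_closed {N s : ℕ} : IsClosed {x : Fin N → ℝ | nrm0 x ≤ s} := by
  have : {x : Fin N → ℝ | nrm0 x ≤ s} =
      ⋃ T : Finset (Fin N), ⋃ (_ : T.card ≤ s), {x | ∀ i ∉ T, x i = 0} := by
    ext x
    simp only [Set.mem_setOf_eq, Set.mem_iUnion]
    constructor
    · intro hx
      refine ⟨Finset.univ.filter (fun i => x i ≠ 0), hx, fun i hi => ?_⟩
      by_contra h
      exact hi (Finset.mem_filter.mpr ⟨Finset.mem_univ i, h⟩)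
    · rintro ⟨T, hT, hx⟩
      refine le_trans (Finset.card_le_card ?_) hT
      intro i hi
      by_contra h
      exact (Finset.mem_filter.mp hi).2 (hx i h)
  rw [this]
  apply isClosed_iUnion_of_finite
  intro T
  apply isClosed_iUnion_of_finite
  intro _
  have : {x : Fin N → ℝ | ∀ i ∉ T, x i = 0} = ⋂ i, ⋂ (_ : i ∉ T), {x | x i = 0} := by
    ext x; simp
  rw [this]
  apply isClosed_iInter; intro i; apply isClosed_iInter; intro _
  exact isClosed_eq (continuous_apply i) continuous_const

theorem stmt19 {M N s : ℕ} (A : Matrix (Fin M) (Fin N) ℝ)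
    (hreg : ∀ d : Fin N → ℝ, d ≠ 0 → nrm0 d ≤ s → 0 < ∑ j, (A.mulVec d j) ^ 2)
    (b : Fin M → ℝ) :
    ∃ xs : Fin N → ℝ, nrm0 xs ≤ s ∧ (∀ i, 0 ≤ xs i) ∧
      ∀ x : Fin N → ℝ, nrm0 x ≤ s → (∀ i, 0 ≤ x i) →
        (1 / 2) * ∑ j, (A.mulVec xs j - b j) ^ 2
          ≤ (1 / 2) * ∑ j, (A.mulVec x j - b j) ^ 2 := by
  classical
  set g : (Fin N → ℝ) → ℝ := fun x => ∑ j, (A.mulVec x j - b j) ^ 2 with hg_def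
  set φ : (Fin N → ℝ) → ℝ := fun x => ∑ j, (A.mulVec x j) ^ 2 with hφ_def
  set Q : (Fin N → ℝ) → ℝ := fun x => ∑ i, x i ^ 2 with hQ_def
  have hmv : Continuous fun x : Fin N → ℝ => A.mulVec x :=
    LinearMap.continuous_of_finiteDimensional (Matrix.mulVecLin A)
  have hg_cont : Continuous g := by
    apply continuous_finset_sum
    intro j _
    exact (((continuous_apply j).comp hmv).sub continuous_const).pow 2
  have hφ_cont : Continuous φ := by
    apply continuous_finset_sum
    intro j _
    exact ((continuous_apply j).comp hmv).pow 2
  have hQ_nonneg : ∀ x : Fin N → ℝ, 0 ≤ Q x := fun x =>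
    Finset.sum_nonneg fun i _ => sq_nonneg _
  have hφ_nonneg : ∀ x : Fin N → ℝ, 0 ≤ φ x := fun x =>
    Finset.sum_nonneg fun i _ => sq_nonneg _
  have hg_nonneg : ∀ x : Fin N → ℝ, 0 ≤ g x := fun x =>
    Finset.sum_nonneg fun i _ => sq_nonneg _
  -- coercivity constant
  have hcoer : ∃ c : ℝ, 0 < c ∧ ∀ x : Fin N → ℝ, nrm0 x ≤ s → c * Q x ≤ φ x := by
    set D : Set (Fin N → ℝ) := {d | nrm0 d ≤ s ∧ Q d = 1} with hD_def
    have hD_closed : IsClosed D :=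
      nrm0_closed.inter (isClosed_eq (by
        apply continuous_finset_sum; intro i _; exact (continuous_apply i).pow 2)
        continuous_const)
    have hD_bdd : D ⊆ Metric.closedBall 0 1 := by
      intro d hd
      rw [Metric.mem_closedBall, dist_zero_right]
      rw [pi_norm_le_iff_of_nonneg zero_le_one]
      intro i
      rw [Real.norm_eq_abs, ← Real.sqrt_one, ← Real.sqrt_sq_eq_abs]
      apply Real.sqrt_le_sqrt
      rw [← hd.2]
      exact Finset.single_le_sum (fun i _ => sq_nonneg (d i)) (Finset.mem_univ i)
    have hD_cpt : IsCompact D :=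
      (isCompact_closedBall 0 1).of_isClosed_subset hD_closed hD_bdd
    by_cases hne : D.Nonempty
    · obtain ⟨d0, hd0D, hd0min⟩ := hD_cpt.exists_isMinOn hne hφ_cont.continuousOn
      have hd0ne : d0 ≠ 0 := by
        intro h
        rw [h] at hd0D
        have : Q (0 : Fin N → ℝ) = 0 := by simp [hQ_def]
        rw [hD_def] at hd0D
        simp only [Set.mem_setOf_eq] at hd0D
        rw [this] at hd0D
        exact one_ne_zero hd0D.2.symm
      have hc_pos : 0 < φ d0 := hreg d0 hd0ne hd0D.1
      refine ⟨φ d0, hc_pos, fun x hx => ?_⟩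
      by_cases hx0 : x = 0
      · simp [hx0, hQ_def, hφ_def, Matrix.mulVec_zero]
      · have hQx_pos : 0 < Q x := by
          rcases Function.ne_iff.mp hx0 with ⟨i, hi⟩
          have hi' : x i ≠ 0 := by simpa using hi
          have : (0:ℝ) < x i ^ 2 := lt_of_le_of_ne (sq_nonneg _) (Ne.symm (pow_ne_zero 2 hi'))
          exact lt_of_lt_of_le this
            (Finset.single_le_sum (fun i _ => sq_nonneg (x i)) (Finset.mem_univ i))
        set r : ℝ := Real.sqrt (Q x) with hr_def
        have hr_pos : 0 < r := Real.sqrt_pos.mpr hQx_pos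
        have hr_sq : r ^ 2 = Q x := Real.sq_sqrt hQx_pos.le
        set d : Fin N → ℝ := r⁻¹ • x with hd_def
        have hdD : d ∈ D := by
          constructor
          · rw [hd_def, nrm0_smul _ (inv_ne_zero hr_pos.ne') x]; exact hx
          · show (∑ i, (r⁻¹ • x) i ^ 2) = 1
            simp only [Pi.smul_apply, smul_eq_mul, mul_pow]
            rw [← Finset.mul_sum]
            have hx' : (∑ i, x i ^ 2) = Q x := rfl
            rw [hx', ← hr_sq]
            field_simp
        have hφd : φ d = r⁻¹ ^ 2 * φ x := by
          rw [hφ_def]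
          simp only [hd_def, Matrix.mulVec_smul, Pi.smul_apply, smul_eq_mul, mul_pow]
          rw [← Finset.mul_sum]
        have := hd0min hdD
        simp only [Set.mem_setOf_eq] at this
        have h1 : φ d0 ≤ r⁻¹ ^ 2 * φ x := by rw [← hφd]; exact this
        calc φ d0 * Q x ≤ (r⁻¹ ^ 2 * φ x) * Q x := by
              apply mul_le_mul_of_nonneg_right h1 (hQ_nonneg x)
          _ = φ x := by
              rw [← hr_sq]; field_simp
    · refine ⟨1, one_pos, fun x hx => ?_⟩
      by_cases hx0 : x = 0
      · simp [hx0, hQ_def, hφ_def, Matrix.mulVec_zero]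
      · exfalso
        have hQx_pos : 0 < Q x := by
          rcases Function.ne_iff.mp hx0 with ⟨i, hi⟩
          have hi' : x i ≠ 0 := by simpa using hi
          have : (0:ℝ) < x i ^ 2 := lt_of_le_of_ne (sq_nonneg _) (Ne.symm (pow_ne_zero 2 hi'))
          exact lt_of_lt_of_le this
            (Finset.single_le_sum (fun i _ => sq_nonneg (x i)) (Finset.mem_univ i))
        set r : ℝ := Real.sqrt (Q x) with hr_def
        have hr_pos : 0 < r := Real.sqrt_pos.mpr hQx_pos
        have hr_sq : r ^ 2 = Q x := Real.sq_sqrt hQx_pos.le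
        apply hne
        refine ⟨r⁻¹ • x, ?_, ?_⟩
        · rw [nrm0_smul _ (inv_ne_zero hr_pos.ne') x]; exact hx
        · show (∑ i, (r⁻¹ • x) i ^ 2) = 1
          simp only [Pi.smul_apply, smul_eq_mul, mul_pow]
          rw [← Finset.mul_sum]
          have hx' : (∑ i, x i ^ 2) = Q x := rfl
          rw [hx', ← hr_sq]
          field_simp
  obtain ⟨c, hc_pos, hc⟩ := hcoer
  -- the level-set-restricted feasible set
  set K : Set (Fin N → ℝ) :=
    {x | (nrm0 x ≤ s ∧ ∀ i, 0 ≤ x i) ∧ g x ≤ g 0} with hK_def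
  have hK_closed : IsClosed K := by
    have hKeq : K = ({x : Fin N → ℝ | nrm0 x ≤ s} ∩ ⋂ i, {x | 0 ≤ x i}) ∩ {x | g x ≤ g 0} := by
      ext x
      simp only [hK_def, Set.mem_setOf_eq, Set.mem_inter_iff, Set.mem_iInter]
    rw [hKeq]
    exact ((nrm0_closed.inter (isClosed_iInter fun i =>
      isClosed_le continuous_const (continuous_apply i))).inter
      (isClosed_le hg_cont continuous_const))
  -- boundedness
  set β : ℝ := Real.sqrt (g 0) + Real.sqrt (∑ j, b j ^ 2) with hβ_def
  have hβ_nonneg : 0 ≤ β := add_nonneg (Real.sqrt_nonneg _) (Real.sqrt_nonneg _)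
  have hbound : ∀ x ∈ K, Q x ≤ β ^ 2 / c := by
    intro x hx
    obtain ⟨⟨hxs, _⟩, hxg⟩ := hx
    have h1 : Real.sqrt (φ x) ≤ β := by
      have heq : φ x = ∑ j, ((A.mulVec x j - b j) + b j) ^ 2 :=
        Finset.sum_congr rfl (fun j _ => by ring)
      rw [heq]
      calc Real.sqrt (∑ j, ((A.mulVec x j - b j) + b j) ^ 2)
          ≤ Real.sqrt (∑ j, (A.mulVec x j - b j) ^ 2) + Real.sqrt (∑ j, b j ^ 2) :=
            sqrt_tri _ _
        _ ≤ Real.sqrt (g 0) + Real.sqrt (∑ j, b j ^ 2) := by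
            apply add_le_add_left
            exact Real.sqrt_le_sqrt hxg
        _ = β := rfl
    have h2 : φ x ≤ β ^ 2 := by
      rw [← Real.sq_sqrt (hφ_nonneg x)]
      exact pow_le_pow_left₀ (Real.sqrt_nonneg _) h1 2
    have h3 : c * Q x ≤ β ^ 2 := le_trans (hc x hxs) h2
    rw [le_div_iff₀ hc_pos, mul_comm]
    exact h3
  have hK_bdd : K ⊆ Metric.closedBall 0 (Real.sqrt (β ^ 2 / c)) := by
    intro x hx
    rw [Metric.mem_closedBall, dist_zero_right]
    rw [pi_norm_le_iff_of_nonneg (Real.sqrt_nonneg _)]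
    intro i
    rw [Real.norm_eq_abs, ← Real.sqrt_sq_eq_abs]
    apply Real.sqrt_le_sqrt
    calc x i ^ 2 ≤ Q x :=
          Finset.single_le_sum (fun i _ => sq_nonneg (x i)) (Finset.mem_univ i)
      _ ≤ β ^ 2 / c := hbound x hx
  have hK_cpt : IsCompact K :=
    (isCompact_closedBall 0 _).of_isClosed_subset hK_closed hK_bdd
  have h0K : (0 : Fin N → ℝ) ∈ K := by
    refine ⟨⟨?_, fun i => le_refl 0⟩, le_refl _⟩
    simp [nrm0]
  have hK_ne : K.Nonempty := ⟨0, h0K⟩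
  obtain ⟨xs, hxsK, hxsmin⟩ := hK_cpt.exists_isMinOn hK_ne hg_cont.continuousOn
  rw [isMinOn_iff] at hxsmin
  refine ⟨xs, hxsK.1.1, hxsK.1.2, fun x hx1 hx2 => ?_⟩
  have hmain : g xs ≤ g x := by
    by_cases hxg : g x ≤ g 0
    · exact hxsmin x ⟨⟨hx1, hx2⟩, hxg⟩
    · exact le_trans (hxsmin 0 h0K) (le_of_lt (not_le.mp hxg))
  have h1 : g xs = ∑ j, (A.mulVec xs j - b j) ^ 2 := rfl
  have h2 : g x = ∑ j, (A.mulVec x j - b j) ^ 2 := rfl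
  rw [h1, h2] at hmain
  linarith
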